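/- Let x ∈ ℝᵐ, let A be an m×k real matrix with nonnegative entries, let λ ≥ 0, and let s ∈ ℝᵏ have strictly positive entries with (AᵀAs)_a + λ > 0 for every index a. Define s⁺ ∈ ℝᵏ by s⁺_a = s_a · (Aᵀx)_a / ((AᵀAs)_a + λ). Then F(s⁺) ≤ F(s). -/

import Mathlib

open Matrix BigOperators

/-- For the single-column objective
`F(s) = (1/2)·‖x − As‖² + λ·Σ_i s_i`, the multiplicative update
`s⁺_a = s_a · (Aᵀx)_a / ((AᵀAs)_a + λ)` does not increase `F`. -/
theorem nnsc_single_column_multiplicative_update_nonincreasing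
    {m k : ℕ}
    (x : Fin m → ℝ) (A : Matrix (Fin m) (Fin k) ℝ)
    (hA : ∀ i j, 0 ≤ A i j)
    (lam : ℝ) (hlam : 0 ≤ lam)
    (s : Fin k → ℝ) (hs : ∀ a, 0 < s a)
    (hden : ∀ a, 0 < (Aᵀ * A).mulVec s a + lam)
    (splus : Fin k → ℝ)
    (hsplus : ∀ a, splus a = s a * (Aᵀ.mulVec x) a / ((Aᵀ * A).mulVec s a + lam))
    (F : (Fin k → ℝ) → ℝ)
    (hF : ∀ s', F s' =
      (1 / 2) * (∑ i, (x i - A.mulVec s' i) ^ 2) + lam * ∑ i, s' i) :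
    F splus ≤ F s := by
  classical
  -- abbreviations
  set c : Fin k → ℝ := Aᵀ.mulVec x with hc
  set Bs : Fin k → ℝ := (Aᵀ * A).mulVec s with hBs
  -- the increment
  set t : Fin k → ℝ := fun a => s a * c a / (Bs a + lam) - s a with htdef
  have hts : splus = fun a => s a + t a := by
    funext a; rw [hsplus a]; simp [htdef]
  -- unfolding of mulVec into sums
  have hmv : ∀ (v : Fin k → ℝ) (i : Fin m), A.mulVec v i = ∑ a, A i a * v a := by
    intro v i; simp [Matrix.mulVec, dotProduct]
  have hcs : ∀ a, c a = ∑ i, A i a * x i := by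
    intro a; simp [hc, Matrix.mulVec, dotProduct, Matrix.transpose_apply]
  have hBsum : ∀ a, Bs a = ∑ b, (∑ i, A i a * A i b) * s b := by
    intro a
    simp [hBs, Matrix.mulVec, dotProduct, Matrix.mul_apply, Matrix.transpose_apply,
      Finset.sum_mul]
  -- linearity
  have hAsp : ∀ i, A.mulVec splus i = A.mulVec s i + A.mulVec t i := by
    intro i
    rw [hts]
    simp [hmv, mul_add, Finset.sum_add_distrib]
  -- dot product identities
  have hdot1 : ∑ i, x i * A.mulVec t i = ∑ a, c a * t a := by
    simp only [hmv, hcs, Finset.mul_sum, Finset.sum_mul]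
    rw [Finset.sum_comm]
    apply Finset.sum_congr rfl
    intro a _
    apply Finset.sum_congr rfl
    intro i _
    ring
  have hdot2 : ∑ i, A.mulVec s i * A.mulVec t i = ∑ a, Bs a * t a := by
    simp only [hmv, hBsum, Finset.sum_mul, Finset.mul_sum]
    rw [Finset.sum_comm]
    apply Finset.sum_congr rfl
    intro a _
    rw [Finset.sum_comm]
    apply Finset.sum_congr rfl
    intro b _
    apply Finset.sum_congr rfl
    intro i _
    ring
  -- Step 1: exact expansion of the difference
  have h1 : F splus - F s =
      (∑ a, (Bs a + lam - c a) * t a) + (1/2) * ∑ i, (A.mulVec t i)^2 := by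
    rw [hF splus, hF s]
    have e1 : ∀ i, (x i - A.mulVec splus i)^2 =
        (x i - A.mulVec s i)^2 - 2 * (x i * A.mulVec t i)
          + 2 * (A.mulVec s i * A.mulVec t i) + (A.mulVec t i)^2 := by
      intro i; rw [hAsp i]; ring
    simp only [e1]
    rw [Finset.sum_add_distrib, Finset.sum_add_distrib, Finset.sum_sub_distrib,
      ← Finset.mul_sum, ← Finset.mul_sum, hdot1, hdot2]
    have e2 : ∀ a, (Bs a + lam - c a) * t a =
        Bs a * t a - c a * t a + lam * t a := by intro a; ring
    simp only [e2]
    rw [Finset.sum_add_distrib, Finset.sum_sub_distrib, ← Finset.mul_sum]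
    have e3 : Finset.univ.sum splus = ∑ a, s a + ∑ a, t a := by
      rw [hts]; exact Finset.sum_add_distrib
    rw [e3]
    ring
  -- Step 2: majorization of the quadratic term (Lee–Seung lemma)
  set q : Fin k → Fin k → ℝ := fun a b => ∑ i, A i a * A i b with hqdef
  have hqsymm : ∀ a b, q a b = q b a := by
    intro a b; simp [hqdef, mul_comm]
  have hqnn : ∀ a b, 0 ≤ q a b :=
    fun a b => Finset.sum_nonneg fun i _ => mul_nonneg (hA i a) (hA i b)
  have hLHS : ∑ i, (A.mulVec t i)^2 = ∑ a, ∑ b, q a b * (t a * t b) := by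
    simp only [hmv, sq, Finset.sum_mul_sum, hqdef]
    rw [Finset.sum_comm]
    apply Finset.sum_congr rfl
    intro a _
    rw [Finset.sum_comm]
    apply Finset.sum_congr rfl
    intro b _
    rw [Finset.sum_mul]
    apply Finset.sum_congr rfl
    intro i _
    ring
  have hRHS : ∑ a, Bs a * t a ^ 2 / s a = ∑ a, ∑ b, q a b * (s b * t a ^ 2 / s a) := by
    apply Finset.sum_congr rfl
    intro a _
    rw [hBsum a, Finset.sum_mul, Finset.sum_div]
    apply Finset.sum_congr rfl
    intro b _
    rw [hqdef]
    field_simp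
  have key : ∀ a b, 2 * (q a b * (t a * t b)) ≤
      q a b * (s b * t a ^ 2 / s a) + q a b * (s a * t b ^ 2 / s b) := by
    intro a b
    have ha := hs a
    have hb := hs b
    have h2 : 2 * (t a * t b) ≤ s b * t a ^ 2 / s a + s a * t b ^ 2 / s b := by
      rw [div_add_div _ _ ha.ne' hb.ne', le_div_iff₀ (by positivity)]
      nlinarith [sq_nonneg (s b * t a - s a * t b)]
    nlinarith [mul_le_mul_of_nonneg_left h2 (hqnn a b)]
  have hswap : ∑ a, ∑ b, q a b * (s a * t b ^ 2 / s b)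
      = ∑ a, ∑ b, q a b * (s b * t a ^ 2 / s a) := by
    rw [Finset.sum_comm]
    apply Finset.sum_congr rfl
    intro a _
    apply Finset.sum_congr rfl
    intro b _
    rw [hqsymm a b]
  have h2 : ∑ i, (A.mulVec t i)^2 ≤ ∑ a, Bs a * t a ^ 2 / s a := by
    rw [hLHS, hRHS]
    have hdouble : 2 * (∑ a, ∑ b, q a b * (t a * t b)) ≤
        2 * (∑ a, ∑ b, q a b * (s b * t a ^ 2 / s a)) := by
      calc 2 * (∑ a, ∑ b, q a b * (t a * t b))
          = ∑ a, ∑ b, 2 * (q a b * (t a * t b)) := by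
            simp [Finset.mul_sum]
        _ ≤ ∑ a, ∑ b, (q a b * (s b * t a ^ 2 / s a) + q a b * (s a * t b ^ 2 / s b)) := by
            apply Finset.sum_le_sum
            intro a _
            apply Finset.sum_le_sum
            intro b _
            exact key a b
        _ = (∑ a, ∑ b, q a b * (s b * t a ^ 2 / s a))
            + ∑ a, ∑ b, q a b * (s a * t b ^ 2 / s b) := by
            rw [← Finset.sum_add_distrib]
            apply Finset.sum_congr rfl
            intro a _
            rw [← Finset.sum_add_distrib]
        _ = 2 * (∑ a, ∑ b, q a b * (s b * t a ^ 2 / s a)) := by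
            rw [hswap]; ring
    linarith
  -- Step 3: per-coordinate bound with the full denominator
  have h3 : ∀ a, (Bs a + lam - c a) * t a + (1/2) * ((Bs a + lam) * t a ^ 2 / s a) ≤ 0 := by
    intro a
    have hD := hden a
    have ha := hs a
    have htEq : t a = s a * c a / (Bs a + lam) - s a := rfl
    rw [htEq]
    have keyEq : (Bs a + lam - c a) * (s a * c a / (Bs a + lam) - s a)
        + (1/2) * ((Bs a + lam) * (s a * c a / (Bs a + lam) - s a) ^ 2 / s a)
        = - (s a * (Bs a + lam - c a) ^ 2 / (2 * (Bs a + lam))) := by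
      field_simp [hD.ne', ha.ne']
      ring
    rw [keyEq]
    have : 0 ≤ s a * (Bs a + lam - c a) ^ 2 / (2 * (Bs a + lam)) :=
      div_nonneg (by positivity) (by linarith)
    linarith
  -- combine everything
  have hlamterm : ∀ a, Bs a * t a ^ 2 / s a ≤ (Bs a + lam) * t a ^ 2 / s a := by
    intro a
    have hpos : 0 ≤ lam * t a ^ 2 / s a :=
      div_nonneg (mul_nonneg hlam (sq_nonneg _)) (hs a).le
    have hsplit : (Bs a + lam) * t a ^ 2 / s a
        = Bs a * t a ^ 2 / s a + lam * t a ^ 2 / s a := by ring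
    linarith
  have hsum2 : ∑ i, (A.mulVec t i)^2 ≤ ∑ a, (Bs a + lam) * t a ^ 2 / s a :=
    le_trans h2 (Finset.sum_le_sum fun a _ => hlamterm a)
  have hfinal : (∑ a, (Bs a + lam - c a) * t a)
      + (1/2) * ∑ a, (Bs a + lam) * t a ^ 2 / s a ≤ 0 := by
    have heq : (∑ a, (Bs a + lam - c a) * t a)
        + (1/2) * ∑ a, (Bs a + lam) * t a ^ 2 / s a
        = ∑ a, ((Bs a + lam - c a) * t a + (1/2) * ((Bs a + lam) * t a ^ 2 / s a)) := by
      rw [Finset.sum_add_distrib, Finset.mul_sum]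
    rw [heq]
    exact Finset.sum_nonpos fun a _ => h3 a
  linarith
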